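/- (Lemma 4.4.) Let N ≥ 3 be an integer, let 0 ≤ s₂ < 2, and let α > 1, β > 1 with α + β = 2^*(s₂). Let (u_n) and (v_n) be sequences of measurable functions ℝ^N → ℝ with sup_n ∫_{ℝ^N} ( |u_n(x)|^{2^*(s₂)} + |v_n(x)|^{2^*(s₂)} ) ‖x‖^{−s₂} dx < ∞, and suppose u_n → u and v_n → v almost everywhere on ℝ^N. Then ∫_{ℝ^N} | |u_n|^{α} − |u_n − u|^{α} − |u|^{α} |^{2^*(s₂)/α}(x) ‖x‖^{−s₂} dx → 0 and ∫_{ℝ^N} | |v_n|^{β} − |v_n − v|^{β} − |v|^{β} |^{2^*(s₂)/β}(x) ‖x‖^{−s₂} dx → 0 as n → ∞. -/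

import Mathlib

open MeasureTheory Filter
open scoped ENNReal


private lemma rpow_mul_self {a α : ℝ} (ha : 0 ≤ a) (hα : 1 < α) :
    a ^ (α - 1) * a = a ^ α := by
  have h1 : a ^ (α - 1) * a ^ (1:ℝ) = a ^ (α - 1 + 1) :=
    (Real.rpow_add' ha (ne_of_gt (by linarith : (0:ℝ) < α - 1 + 1))).symm
  rw [Real.rpow_one] at h1
  rw [h1]; ring_nf

private lemma young_like {a b δ α : ℝ} (ha : 0 ≤ a) (hb : 0 ≤ b) (hδ : 0 < δ) (hα : 1 < α) :
    a ^ (α - 1) * b ≤ δ * a ^ α + δ ^ (1 - α) * b ^ α := by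
  have hδα : 0 ≤ δ ^ (1 - α) := Real.rpow_nonneg hδ.le _
  have hbα : 0 ≤ b ^ α := Real.rpow_nonneg hb _
  have haα : 0 ≤ a ^ α := Real.rpow_nonneg ha _
  by_cases h : b ≤ δ * a
  · have key : a ^ (α - 1) * b ≤ δ * a ^ α := by
      calc a ^ (α - 1) * b ≤ a ^ (α - 1) * (δ * a) :=
            mul_le_mul_of_nonneg_left h (Real.rpow_nonneg ha _)
        _ = δ * (a ^ (α - 1) * a) := by ring
        _ = δ * a ^ α := by rw [rpow_mul_self ha hα]
    nlinarith
  · push_neg at h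
    have hba : a ≤ b / δ := (le_div_iff₀ hδ).2 (by linarith [mul_comm δ a])
    have key : a ^ (α - 1) * b ≤ δ ^ (1 - α) * b ^ α := by
      calc a ^ (α - 1) * b ≤ (b / δ) ^ (α - 1) * b := by
            have := Real.rpow_le_rpow ha hba (by linarith : (0:ℝ) ≤ α - 1)
            exact mul_le_mul_of_nonneg_right this hb
        _ = b ^ (α - 1) * δ ^ (-(α - 1)) * b := by
            rw [Real.div_rpow hb hδ.le, Real.rpow_neg hδ.le, div_eq_mul_inv]
        _ = δ ^ (1 - α) * (b ^ (α - 1) * b) := by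
            rw [(by ring : 1 - α = -(α - 1))]; ring
        _ = δ ^ (1 - α) * b ^ α := by rw [rpow_mul_self hb hα]
    nlinarith


private lemma rpow_add_le_two_rpow {a b p : ℝ} (ha : 0 ≤ a) (hb : 0 ≤ b) (hp : 0 ≤ p) :
    (a + b) ^ p ≤ 2 ^ p * (a ^ p + b ^ p) := by
  have h1 : a + b ≤ 2 * max a b := by
    rcases le_total a b with h | h
    · simp [max_eq_right h]; linarith
    · simp [max_eq_left h]; linarith
  have h2 : (a + b) ^ p ≤ (2 * max a b) ^ p :=
    Real.rpow_le_rpow (by positivity) h1 hp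
  have h3 : (2 * max a b) ^ p = 2 ^ p * (max a b) ^ p :=
    Real.mul_rpow (by norm_num) (le_max_of_le_left ha)
  have h4 : (max a b) ^ p ≤ a ^ p + b ^ p := by
    rcases le_total a b with h | h
    · rw [max_eq_right h]; nlinarith [Real.rpow_nonneg ha p]
    · rw [max_eq_left h]; nlinarith [Real.rpow_nonneg hb p]
  have h5 : (0:ℝ) < 2 ^ p := Real.rpow_pos_of_pos (by norm_num) p
  nlinarith

private lemma abs_rpow_sub_rpow_le {x y α : ℝ} (hx : 0 ≤ x) (hy : 0 ≤ y) (hα : 1 ≤ α) :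
    |x ^ α - y ^ α| ≤ α * (max x y) ^ (α - 1) * |x - y| := by
  set M := max x y with hM
  have hder : ∀ t ∈ Set.Icc (0:ℝ) M, HasDerivWithinAt (fun t : ℝ => t ^ α)
      ((fun t : ℝ => α * t ^ (α - 1)) t) (Set.Icc 0 M) t := fun t _ =>
    (Real.hasDerivAt_rpow_const (Or.inr hα)).hasDerivWithinAt
  have hbound : ∀ t ∈ Set.Icc (0:ℝ) M, ‖(fun t : ℝ => α * t ^ (α - 1)) t‖ ≤ α * M ^ (α - 1) := by
    intro t ht
    have h0 : 0 ≤ t := ht.1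
    have h1 : t ^ (α - 1) ≤ M ^ (α - 1) := Real.rpow_le_rpow h0 ht.2 (by linarith)
    have h2 : 0 ≤ t ^ (α - 1) := Real.rpow_nonneg h0 _
    simp only [Real.norm_eq_abs]
    rw [abs_of_nonneg (by positivity)]
    have hα0 : (0:ℝ) ≤ α := by linarith
    nlinarith
  have hxM : x ∈ Set.Icc (0:ℝ) M := ⟨hx, le_max_left _ _⟩
  have hyM : y ∈ Set.Icc (0:ℝ) M := ⟨hy, le_max_right _ _⟩
  have := (convex_Icc (0:ℝ) M).norm_image_sub_le_of_norm_hasDerivWithin_le hder hbound hyM hxM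
  simpa [Real.norm_eq_abs] using this

private lemma key_ineq {α δ : ℝ} (hα : 1 < α) (hδ : 0 < δ) (a b : ℝ) :
    |(|a + b| ^ α - |a| ^ α)| ≤ α * 2 ^ (α - 1) * δ * |a| ^ α
      + α * 2 ^ (α - 1) * (δ ^ (1 - α) + 1) * |b| ^ α := by
  set A := |a| with hA
  set B := |b| with hB
  have hA0 : 0 ≤ A := abs_nonneg a
  have hB0 : 0 ≤ B := abs_nonneg b
  set m := max |a + b| A with hm
  have hm0 : 0 ≤ m := le_trans (abs_nonneg (a+b)) (le_max_left _ _)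
  have h1 : |(|a + b| ^ α - A ^ α)| ≤ α * m ^ (α - 1) * |(|a + b| - A)| :=
    abs_rpow_sub_rpow_le (abs_nonneg _) hA0 hα.le
  have hd : |(|a + b| - A)| ≤ B := by
    have := abs_abs_sub_abs_le_abs_sub (a + b) a
    simpa using this
  have hmAB : m ≤ A + B := max_le (abs_add_le a b) (by linarith)
  have h2 : m ^ (α - 1) ≤ 2 ^ (α - 1) * (A ^ (α - 1) + B ^ (α - 1)) :=
    le_trans (Real.rpow_le_rpow hm0 hmAB (by linarith))
      (rpow_add_le_two_rpow hA0 hB0 (by linarith))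
  have hm1 : 0 ≤ m ^ (α - 1) := Real.rpow_nonneg hm0 _
  have hα0 : (0:ℝ) ≤ α := by linarith
  calc |(|a + b| ^ α - A ^ α)|
      ≤ α * m ^ (α - 1) * B := by
        refine le_trans h1 ?_
        exact mul_le_mul_of_nonneg_left hd (by positivity)
    _ ≤ α * (2 ^ (α - 1) * (A ^ (α - 1) + B ^ (α - 1))) * B := by gcongr
    _ = α * 2 ^ (α - 1) * (A ^ (α - 1) * B) + α * 2 ^ (α - 1) * (B ^ (α - 1) * B) := by ring
    _ ≤ α * 2 ^ (α - 1) * (δ * A ^ α + δ ^ (1 - α) * B ^ α) + α * 2 ^ (α - 1) * (B ^ (α - 1) * B) := by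
        have := mul_le_mul_of_nonneg_left (young_like hA0 hB0 hδ hα)
          (by positivity : (0:ℝ) ≤ α * 2 ^ (α - 1))
        linarith
    _ = α * 2 ^ (α - 1) * (δ * A ^ α + δ ^ (1 - α) * B ^ α) + α * 2 ^ (α - 1) * B ^ α := by
        rw [rpow_mul_self hB0 hα]
    _ = α * 2 ^ (α - 1) * δ * A ^ α + α * 2 ^ (α - 1) * (δ ^ (1 - α) + 1) * B ^ α := by ring


private lemma brezis_lieb {X : Type*} [MeasurableSpace X] (μ : Measure X) {p α : ℝ}
    (hα : 1 < α) (hp : 0 < p)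
    (u : ℕ → X → ℝ) (hu : ∀ n, AEMeasurable (u n) μ)
    (u₀ : X → ℝ)
    (hae : ∀ᵐ x ∂μ, Tendsto (fun n => u n x) atTop (nhds (u₀ x)))
    (S : ℝ≥0∞) (hS : S ≠ ⊤)
    (hb : ∀ n, ∫⁻ x, ENNReal.ofReal (|u n x| ^ p) ∂μ ≤ S) :
    Tendsto (fun n => ∫⁻ x, ENNReal.ofReal
        (|(|u n x| ^ α - |u n x - u₀ x| ^ α - |u₀ x| ^ α)| ^ (p / α)) ∂μ)
      atTop (nhds 0) := by
  have hα0 : (0:ℝ) < α := by linarith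
  set q := p / α with hqdef
  have hq : 0 < q := div_pos hp hα0
  have hαq : α * q = p := by rw [hqdef]; field_simp
  have hu₀ : AEMeasurable u₀ μ := aemeasurable_of_tendsto_metrizable_ae atTop hu hae
  -- Fatou bound on u₀
  have hU₀ : ∫⁻ x, ENNReal.ofReal (|u₀ x| ^ p) ∂μ ≤ S := by
    have hmeas : ∀ n, AEMeasurable (fun x => ENNReal.ofReal (|u n x| ^ p)) μ := by
      intro n; have := hu n; fun_prop
    have hpt : ∀ᵐ x ∂μ, ENNReal.ofReal (|u₀ x| ^ p)
        = liminf (fun n => ENNReal.ofReal (|u n x| ^ p)) atTop := by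
      filter_upwards [hae] with x hx
      have h1 : Tendsto (fun n => |u n x|) atTop (nhds |u₀ x|) :=
        (continuous_abs.tendsto _).comp hx
      have h2 : Tendsto (fun n => |u n x| ^ p) atTop (nhds (|u₀ x| ^ p)) :=
        ((Real.continuousAt_rpow_const _ p (Or.inr hp.le)).tendsto).comp h1
      exact (((ENNReal.continuous_ofReal.tendsto _).comp h2).liminf_eq).symm
    calc ∫⁻ x, ENNReal.ofReal (|u₀ x| ^ p) ∂μ
        = ∫⁻ x, liminf (fun n => ENNReal.ofReal (|u n x| ^ p)) atTop ∂μ :=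
          lintegral_congr_ae hpt
      _ ≤ liminf (fun n => ∫⁻ x, ENNReal.ofReal (|u n x| ^ p) ∂μ) atTop :=
          lintegral_liminf_le' hmeas
      _ ≤ liminf (fun _ : ℕ => S) atTop := liminf_le_liminf (Eventually.of_forall hb)
      _ = S := liminf_const S
  -- bound on differences
  set M : ℝ≥0∞ := ENNReal.ofReal (2 ^ p) * (S + S) with hMdef
  have hM : M ≠ ⊤ := ENNReal.mul_ne_top ENNReal.ofReal_ne_top
    (ENNReal.add_ne_top.2 ⟨hS, hS⟩)
  have hdiff : ∀ n, ∫⁻ x, ENNReal.ofReal (|u n x - u₀ x| ^ p) ∂μ ≤ M := by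
    intro n
    have hpt : ∀ x, ENNReal.ofReal (|u n x - u₀ x| ^ p) ≤ ENNReal.ofReal (2 ^ p)
        * (ENNReal.ofReal (|u n x| ^ p) + ENNReal.ofReal (|u₀ x| ^ p)) := by
      intro x
      have h0 : |u n x - u₀ x| ≤ |u n x| + |u₀ x| := abs_sub _ _
      have h1 : |u n x - u₀ x| ^ p ≤ 2 ^ p * (|u n x| ^ p + |u₀ x| ^ p) :=
        le_trans (Real.rpow_le_rpow (abs_nonneg _) h0 hp.le)
          (rpow_add_le_two_rpow (abs_nonneg _) (abs_nonneg _) hp.le)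
      calc ENNReal.ofReal (|u n x - u₀ x| ^ p)
          ≤ ENNReal.ofReal (2 ^ p * (|u n x| ^ p + |u₀ x| ^ p)) :=
            ENNReal.ofReal_le_ofReal h1
        _ = _ := by
            rw [ENNReal.ofReal_mul (by positivity),
              ENNReal.ofReal_add (by positivity) (by positivity)]
    calc ∫⁻ x, ENNReal.ofReal (|u n x - u₀ x| ^ p) ∂μ
        ≤ ∫⁻ x, ENNReal.ofReal (2 ^ p)
            * (ENNReal.ofReal (|u n x| ^ p) + ENNReal.ofReal (|u₀ x| ^ p)) ∂μ :=
          lintegral_mono hpt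
      _ = ENNReal.ofReal (2 ^ p) * (∫⁻ x, ENNReal.ofReal (|u n x| ^ p) ∂μ
            + ∫⁻ x, ENNReal.ofReal (|u₀ x| ^ p) ∂μ) := by
          rw [lintegral_const_mul' _ _ ENNReal.ofReal_ne_top,
            lintegral_add_left' (by have := hu n; fun_prop) _]
      _ ≤ M := mul_le_mul_right (add_le_add (hb n) hU₀) _
  set K := α * 2 ^ (α - 1) with hKdef
  have hK : 0 < K := by positivity
  set I : ℕ → ℝ≥0∞ := fun n => ∫⁻ x, ENNReal.ofReal
      (|(|u n x| ^ α - |u n x - u₀ x| ^ α - |u₀ x| ^ α)| ^ q) ∂μ with hIdef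
  -- a.e. convergence facts
  have haeF : ∀ᵐ x ∂μ,
      Tendsto (fun n => |(|u n x| ^ α - |u n x - u₀ x| ^ α - |u₀ x| ^ α)|) atTop (nhds 0) ∧
      Tendsto (fun n => |u n x - u₀ x| ^ α) atTop (nhds 0) := by
    filter_upwards [hae] with x hx
    have habs : Tendsto (fun n => |u n x|) atTop (nhds |u₀ x|) :=
      (continuous_abs.tendsto _).comp hx
    have hA : Tendsto (fun n => |u n x| ^ α) atTop (nhds (|u₀ x| ^ α)) :=
      ((Real.continuousAt_rpow_const _ α (Or.inr hα0.le)).tendsto).comp habs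
    have hsub : Tendsto (fun n => |u n x - u₀ x|) atTop (nhds 0) := by
      have h1 : Tendsto (fun n => u n x - u₀ x) atTop (nhds 0) := by
        simpa using hx.sub (tendsto_const_nhds (x := u₀ x))
      simpa [Function.comp_def] using (continuous_abs.tendsto (0:ℝ)).comp h1
    have he : Tendsto (fun n => |u n x - u₀ x| ^ α) atTop (nhds 0) := by
      have h2 := ((Real.continuousAt_rpow_const 0 α (Or.inr hα0.le)).tendsto).comp hsub
      simpa [Function.comp_def, Real.zero_rpow hα0.ne'] using h2
    refine ⟨?_, he⟩
    have hF0 : Tendsto (fun n => |u n x| ^ α - |u n x - u₀ x| ^ α - |u₀ x| ^ α)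
        atTop (nhds 0) := by
      have := (hA.sub he).sub (tendsto_const_nhds (x := |u₀ x| ^ α))
      simpa using this
    simpa [Function.comp_def] using (continuous_abs.tendsto (0:ℝ)).comp hF0
  -- limsup bound for each δ
  have hlimsup : ∀ δ : ℝ, 0 < δ → limsup I atTop
      ≤ ENNReal.ofReal (2 ^ q) * (ENNReal.ofReal ((K * δ) ^ q) * M) := by
    intro δ hδ
    set Cδ := K * (δ ^ (1 - α) + 1) + 1 with hCdef
    have hδα : (0:ℝ) ≤ δ ^ (1 - α) := Real.rpow_nonneg hδ.le _
    have hC : 0 < Cδ := by rw [hCdef]; nlinarith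
    set g : ℕ → X → ℝ := fun n x =>
      max (|(|u n x| ^ α - |u n x - u₀ x| ^ α - |u₀ x| ^ α)|
        - K * δ * |u n x - u₀ x| ^ α) 0 with hgdef
    have hg0 : ∀ n x, 0 ≤ g n x := fun n x => le_max_right _ _
    have hgle : ∀ n x, g n x ≤ Cδ * |u₀ x| ^ α := by
      intro n x
      have h := key_ineq hα hδ (u n x - u₀ x) (u₀ x)
      rw [show u n x - u₀ x + u₀ x = u n x by ring] at h
      have h2 : |(|u n x| ^ α - |u n x - u₀ x| ^ α - |u₀ x| ^ α)|
          ≤ |(|u n x| ^ α - |u n x - u₀ x| ^ α)| + |u₀ x| ^ α := by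
        have h3 := abs_sub (|u n x| ^ α - |u n x - u₀ x| ^ α) (|u₀ x| ^ α)
        rwa [abs_of_nonneg (Real.rpow_nonneg (abs_nonneg _) α)] at h3
      have h4 : (0:ℝ) ≤ |u₀ x| ^ α := Real.rpow_nonneg (abs_nonneg _) α
      rw [← hKdef] at h
      apply max_le _ (by positivity)
      rw [hCdef]; nlinarith
    have hgmeas : ∀ n, AEMeasurable (fun x => ENNReal.ofReal (g n x ^ q)) μ := by
      intro n; have h1 := hu n; have h2 := hu₀; rw [hgdef]; fun_prop
    have hbound : ∀ n, (fun x => ENNReal.ofReal (g n x ^ q)) ≤ᵐ[μ]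
        fun x => ENNReal.ofReal (Cδ ^ q) * ENNReal.ofReal (|u₀ x| ^ p) := by
      intro n
      refine Eventually.of_forall fun x => ?_
      have h1 : g n x ^ q ≤ (Cδ * |u₀ x| ^ α) ^ q :=
        Real.rpow_le_rpow (hg0 n x) (hgle n x) hq.le
      have h2 : (Cδ * |u₀ x| ^ α) ^ q = Cδ ^ q * |u₀ x| ^ p := by
        rw [Real.mul_rpow hC.le (Real.rpow_nonneg (abs_nonneg _) _),
          ← Real.rpow_mul (abs_nonneg _), hαq]
      calc ENNReal.ofReal (g n x ^ q) ≤ ENNReal.ofReal (Cδ ^ q * |u₀ x| ^ p) :=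
            ENNReal.ofReal_le_ofReal (h2 ▸ h1)
        _ = _ := ENNReal.ofReal_mul (by positivity)
    have hfin : ∫⁻ x, ENNReal.ofReal (Cδ ^ q) * ENNReal.ofReal (|u₀ x| ^ p) ∂μ ≠ ⊤ := by
      rw [lintegral_const_mul' _ _ ENNReal.ofReal_ne_top]
      exact ENNReal.mul_ne_top ENNReal.ofReal_ne_top (lt_of_le_of_lt hU₀ hS.lt_top).ne
    have hglim : ∀ᵐ x ∂μ, Tendsto (fun n => ENNReal.ofReal (g n x ^ q)) atTop
        (nhds ((fun _ : X => (0:ℝ≥0∞)) x)) := by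
      filter_upwards [haeF] with x hx
      have h1 : Tendsto (fun n => g n x) atTop (nhds 0) := by
        have h2 := hx.1.sub (hx.2.const_mul (K * δ))
        have h3 := h2.max (tendsto_const_nhds (x := (0:ℝ)))
        simpa [hgdef] using h3
      have h4 : Tendsto (fun n => g n x ^ q) atTop (nhds 0) := by
        have := ((Real.continuousAt_rpow_const 0 q (Or.inr hq.le)).tendsto).comp h1
        simpa [Function.comp_def, Real.zero_rpow hq.ne'] using this
      have h5 := (ENNReal.continuous_ofReal.tendsto 0).comp h4
      simpa [Function.comp_def] using h5
    have hJ : Tendsto (fun n => ∫⁻ x, ENNReal.ofReal (g n x ^ q) ∂μ) atTop (nhds 0) := by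
      have := tendsto_lintegral_of_dominated_convergence' _ hgmeas hbound hfin hglim
      simpa using this
    have hIle : ∀ n, I n ≤ ENNReal.ofReal (2 ^ q) * (ENNReal.ofReal ((K * δ) ^ q) * M)
        + ENNReal.ofReal (2 ^ q) * ∫⁻ x, ENNReal.ofReal (g n x ^ q) ∂μ := by
      intro n
      have hpt : ∀ x, ENNReal.ofReal
          (|(|u n x| ^ α - |u n x - u₀ x| ^ α - |u₀ x| ^ α)| ^ q)
          ≤ ENNReal.ofReal (2 ^ q) * (ENNReal.ofReal ((K * δ) ^ q)
              * ENNReal.ofReal (|u n x - u₀ x| ^ p) + ENNReal.ofReal (g n x ^ q)) := by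
        intro x
        have hFle : |(|u n x| ^ α - |u n x - u₀ x| ^ α - |u₀ x| ^ α)|
            ≤ K * δ * |u n x - u₀ x| ^ α + g n x := by
          have := le_max_left (|(|u n x| ^ α - |u n x - u₀ x| ^ α - |u₀ x| ^ α)|
            - K * δ * |u n x - u₀ x| ^ α) (0:ℝ)
          rw [hgdef]; dsimp only; linarith
        have he0 : (0:ℝ) ≤ |u n x - u₀ x| ^ α := Real.rpow_nonneg (abs_nonneg _) _
        have h1 : |(|u n x| ^ α - |u n x - u₀ x| ^ α - |u₀ x| ^ α)| ^ q
            ≤ 2 ^ q * ((K * δ * |u n x - u₀ x| ^ α) ^ q + g n x ^ q) :=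
          le_trans (Real.rpow_le_rpow (abs_nonneg _) hFle hq.le)
            (rpow_add_le_two_rpow (by positivity) (hg0 n x) hq.le)
        have h2 : (K * δ * |u n x - u₀ x| ^ α) ^ q = (K * δ) ^ q * |u n x - u₀ x| ^ p := by
          rw [Real.mul_rpow (by positivity) he0, ← Real.rpow_mul (abs_nonneg _), hαq]
        rw [h2] at h1
        calc ENNReal.ofReal (|(|u n x| ^ α - |u n x - u₀ x| ^ α - |u₀ x| ^ α)| ^ q)
            ≤ ENNReal.ofReal (2 ^ q * ((K * δ) ^ q * |u n x - u₀ x| ^ p + g n x ^ q)) :=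
              ENNReal.ofReal_le_ofReal h1
          _ = _ := by
              rw [ENNReal.ofReal_mul (by positivity),
                ENNReal.ofReal_add (by positivity) (by positivity),
                ENNReal.ofReal_mul (by positivity)]
      calc I n ≤ ∫⁻ x, ENNReal.ofReal (2 ^ q) * (ENNReal.ofReal ((K * δ) ^ q)
              * ENNReal.ofReal (|u n x - u₀ x| ^ p) + ENNReal.ofReal (g n x ^ q)) ∂μ :=
            lintegral_mono hpt
        _ = ENNReal.ofReal (2 ^ q) * (ENNReal.ofReal ((K * δ) ^ q)
              * ∫⁻ x, ENNReal.ofReal (|u n x - u₀ x| ^ p) ∂μ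
              + ∫⁻ x, ENNReal.ofReal (g n x ^ q) ∂μ) := by
            rw [lintegral_const_mul' _ _ ENNReal.ofReal_ne_top,
              lintegral_add_left' (by have h1 := hu n; have h2 := hu₀; fun_prop) _,
              lintegral_const_mul' _ _ ENNReal.ofReal_ne_top]
        _ ≤ ENNReal.ofReal (2 ^ q) * (ENNReal.ofReal ((K * δ) ^ q) * M
              + ∫⁻ x, ENNReal.ofReal (g n x ^ q) ∂μ) := by
            gcongr
            exact hdiff n
        _ = _ := by ring
    have hB : Tendsto (fun n => ENNReal.ofReal (2 ^ q) * (ENNReal.ofReal ((K * δ) ^ q) * M)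
        + ENNReal.ofReal (2 ^ q) * ∫⁻ x, ENNReal.ofReal (g n x ^ q) ∂μ) atTop
        (nhds (ENNReal.ofReal (2 ^ q) * (ENNReal.ofReal ((K * δ) ^ q) * M))) := by
      have h1 := ENNReal.Tendsto.const_mul hJ
        (Or.inr (ENNReal.ofReal_ne_top (r := 2 ^ q)))
      have h2 := (tendsto_const_nhds (x := ENNReal.ofReal (2 ^ q)
        * (ENNReal.ofReal ((K * δ) ^ q) * M)) (f := atTop (α := ℕ))).add h1
      simpa using h2
    calc limsup I atTop ≤ limsup (fun n => ENNReal.ofReal (2 ^ q)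
          * (ENNReal.ofReal ((K * δ) ^ q) * M)
          + ENNReal.ofReal (2 ^ q) * ∫⁻ x, ENNReal.ofReal (g n x ^ q) ∂μ) atTop :=
        limsup_le_limsup (Eventually.of_forall hIle)
      _ = _ := hB.limsup_eq
  -- conclude limsup = 0
  have hls0 : limsup I atTop = 0 := by
    refine le_antisymm ?_ zero_le
    have hφ : Tendsto (fun δ : ℝ => ENNReal.ofReal (2 ^ q)
        * (ENNReal.ofReal ((K * δ) ^ q) * M)) (nhdsWithin 0 (Set.Ioi 0)) (nhds 0) := by
      have h1 : Tendsto (fun δ : ℝ => (K * δ) ^ q) (nhds 0) (nhds 0) := by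
        have h2 : Tendsto (fun δ : ℝ => K * δ) (nhds 0) (nhds 0) := by
          simpa using (tendsto_id (x := nhds (0:ℝ))).const_mul K
        have h3 := ((Real.continuousAt_rpow_const 0 q (Or.inr hq.le)).tendsto).comp h2
        simpa [Function.comp_def, Real.zero_rpow hq.ne'] using h3
      have h4 : Tendsto (fun δ : ℝ => ENNReal.ofReal ((K * δ) ^ q)) (nhds 0) (nhds 0) := by
        have := (ENNReal.continuous_ofReal.tendsto 0).comp h1
        simpa [Function.comp_def] using this
      have h5 := ENNReal.Tendsto.mul_const (ENNReal.Tendsto.const_mul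
        (h4.mono_left (nhdsWithin_le_nhds (s := Set.Ioi (0:ℝ)))) (Or.inr (ENNReal.ofReal_ne_top (r := 2 ^ q))))
        (Or.inr hM)
      -- h5 : Tendsto (fun δ => (ofReal (2^q) * ofReal ((K*δ)^q)) * M) _ (nhds ((ofReal(2^q) * 0) * M))
      have h6 : ∀ δ : ℝ, ENNReal.ofReal (2 ^ q) * ENNReal.ofReal ((K * δ) ^ q) * M
          = ENNReal.ofReal (2 ^ q) * (ENNReal.ofReal ((K * δ) ^ q) * M) := fun δ => mul_assoc _ _ _
      simpa [h6] using h5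
    refine ENNReal.le_of_forall_pos_le_add fun ε hε _ => ?_
    have hεpos : (0:ℝ≥0∞) < ε := ENNReal.coe_pos.2 hε
    obtain ⟨δ, hδlt, hδpos⟩ := ((hφ.eventually_lt_const hεpos).and
      self_mem_nhdsWithin).exists
    calc limsup I atTop ≤ ENNReal.ofReal (2 ^ q) * (ENNReal.ofReal ((K * δ) ^ q) * M) :=
          hlimsup δ hδpos
      _ ≤ 0 + ε := by rw [zero_add]; exact hδlt.le
  have hli0 : liminf I atTop = 0 :=
    le_antisymm (le_trans liminf_le_limsup hls0.le) zero_le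
  exact tendsto_of_liminf_eq_limsup hli0 hls0


/-- Lemma 4.4: Brezis–Lieb type convergence for `|u_n|^α` and `|v_n|^β`. -/
theorem stmt_14 (N : ℕ) (hN : 3 ≤ N) (s₂ α β : ℝ)
    (hs₂0 : 0 ≤ s₂) (hs₂2 : s₂ < 2) (hα : 1 < α) (hβ : 1 < β)
    (hαβ : α + β = 2 * ((N : ℝ) - s₂) / ((N : ℝ) - 2))
    (u v : ℕ → EuclideanSpace ℝ (Fin N) → ℝ)
    (hu : ∀ n, Measurable (u n)) (hv : ∀ n, Measurable (v n))
    (u₀ v₀ : EuclideanSpace ℝ (Fin N) → ℝ)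
    (hbdd : (⨆ n, ∫⁻ x, ENNReal.ofReal
        ((|u n x| ^ (2 * ((N : ℝ) - s₂) / ((N : ℝ) - 2))
          + |v n x| ^ (2 * ((N : ℝ) - s₂) / ((N : ℝ) - 2))) * ‖x‖ ^ (-s₂))) < ⊤)
    (haeu : ∀ᵐ (x : EuclideanSpace ℝ (Fin N)) ∂volume,
      Tendsto (fun n => u n x) atTop (nhds (u₀ x)))
    (haev : ∀ᵐ (x : EuclideanSpace ℝ (Fin N)) ∂volume,
      Tendsto (fun n => v n x) atTop (nhds (v₀ x))) :
    Tendsto (fun n => ∫⁻ x, ENNReal.ofReal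
        (abs (|u n x| ^ α - |u n x - u₀ x| ^ α - |u₀ x| ^ α)
            ^ (2 * ((N : ℝ) - s₂) / ((N : ℝ) - 2) / α) * ‖x‖ ^ (-s₂)))
      atTop (nhds 0) ∧
    Tendsto (fun n => ∫⁻ x, ENNReal.ofReal
        (abs (|v n x| ^ β - |v n x - v₀ x| ^ β - |v₀ x| ^ β)
            ^ (2 * ((N : ℝ) - s₂) / ((N : ℝ) - 2) / β) * ‖x‖ ^ (-s₂)))
      atTop (nhds 0) := by
  set p : ℝ := 2 * ((N : ℝ) - s₂) / ((N : ℝ) - 2) with hpdef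
  have hN3 : (3:ℝ) ≤ (N:ℝ) := by exact_mod_cast hN
  have hp : 0 < p := by
    rw [hpdef]
    exact div_pos (by nlinarith) (by nlinarith)
  have hwmeas : Measurable (fun x : EuclideanSpace ℝ (Fin N) =>
      ENNReal.ofReal (‖x‖ ^ (-s₂))) := by fun_prop
  set w : EuclideanSpace ℝ (Fin N) → ℝ≥0∞ :=
    fun x => ENNReal.ofReal (‖x‖ ^ (-s₂)) with hwdef
  set μ := (volume : Measure (EuclideanSpace ℝ (Fin N))).withDensity w with hμdef
  have hwlt : ∀ᵐ x ∂(volume : Measure (EuclideanSpace ℝ (Fin N))), w x < ⊤ :=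
    Eventually.of_forall (fun x => ENNReal.ofReal_lt_top)
  have hconv : ∀ f : EuclideanSpace ℝ (Fin N) → ℝ, (∀ x, 0 ≤ f x) →
      ∫⁻ x, ENNReal.ofReal (f x * ‖x‖ ^ (-s₂)) = ∫⁻ x, ENNReal.ofReal (f x) ∂μ := by
    intro f hf
    rw [hμdef, lintegral_withDensity_eq_lintegral_mul_non_measurable volume hwmeas hwlt]
    apply lintegral_congr
    intro x
    simp only [Pi.mul_apply, hwdef]
    rw [mul_comm (f x) _, ENNReal.ofReal_mul (Real.rpow_nonneg (norm_nonneg x) _)]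
  set S := ⨆ n, ∫⁻ x, ENNReal.ofReal
      ((|u n x| ^ p + |v n x| ^ p) * ‖x‖ ^ (-s₂)) with hSdef
  have hS : S ≠ ⊤ := hbdd.ne
  have hwnn : ∀ x : EuclideanSpace ℝ (Fin N), (0:ℝ) ≤ ‖x‖ ^ (-s₂) :=
    fun x => Real.rpow_nonneg (norm_nonneg x) _
  have hub : ∀ n, ∫⁻ x, ENNReal.ofReal (|u n x| ^ p) ∂μ ≤ S := by
    intro n
    rw [← hconv _ (fun x => Real.rpow_nonneg (abs_nonneg _) _)]
    refine le_trans (lintegral_mono fun x => ENNReal.ofReal_le_ofReal ?_)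
      (le_iSup (fun n => ∫⁻ x, ENNReal.ofReal
        ((|u n x| ^ p + |v n x| ^ p) * ‖x‖ ^ (-s₂))) n)
    exact mul_le_mul_of_nonneg_right
      (le_add_of_nonneg_right (Real.rpow_nonneg (abs_nonneg _) _)) (hwnn x)
  have hvb : ∀ n, ∫⁻ x, ENNReal.ofReal (|v n x| ^ p) ∂μ ≤ S := by
    intro n
    rw [← hconv _ (fun x => Real.rpow_nonneg (abs_nonneg _) _)]
    refine le_trans (lintegral_mono fun x => ENNReal.ofReal_le_ofReal ?_)
      (le_iSup (fun n => ∫⁻ x, ENNReal.ofReal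
        ((|u n x| ^ p + |v n x| ^ p) * ‖x‖ ^ (-s₂))) n)
    exact mul_le_mul_of_nonneg_right
      (le_add_of_nonneg_left (Real.rpow_nonneg (abs_nonneg _) _)) (hwnn x)
  have hμle : ae μ ≤ ae (volume : Measure (EuclideanSpace ℝ (Fin N))) :=
    (withDensity_absolutelyContinuous volume w).ae_le
  constructor
  · have hrw : ∀ n, ∫⁻ x, ENNReal.ofReal
        (|(|u n x| ^ α - |u n x - u₀ x| ^ α - |u₀ x| ^ α)| ^ (p / α) * ‖x‖ ^ (-s₂))
        = ∫⁻ x, ENNReal.ofReal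
          (|(|u n x| ^ α - |u n x - u₀ x| ^ α - |u₀ x| ^ α)| ^ (p / α)) ∂μ :=
      fun n => hconv _ (fun x => Real.rpow_nonneg (abs_nonneg _) _)
    simp only [hrw]
    exact brezis_lieb μ hα hp u (fun n => (hu n).aemeasurable) u₀
      (haeu.filter_mono hμle) S hS hub
  · have hrw : ∀ n, ∫⁻ x, ENNReal.ofReal
        (|(|v n x| ^ β - |v n x - v₀ x| ^ β - |v₀ x| ^ β)| ^ (p / β) * ‖x‖ ^ (-s₂))
        = ∫⁻ x, ENNReal.ofReal
          (|(|v n x| ^ β - |v n x - v₀ x| ^ β - |v₀ x| ^ β)| ^ (p / β)) ∂μ :=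
      fun n => hconv _ (fun x => Real.rpow_nonneg (abs_nonneg _) _)
    simp only [hrw]
    exact brezis_lieb μ hβ hp v (fun n => (hv n).aemeasurable) v₀
      (haev.filter_mono hμle) S hS hvb
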